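/- Let G, H, K be finite groups, let X be a bifree (G,H)-biset and Y a bifree (H,K)-biset. Let U ≤ G and W ≤ K be isomorphic subgroups and let γ: W → U be an isomorphism. Then |(X ×_H Y)^{Δ(U,γ,W)}| = (1/|H|) · Σ_{V ≤ H} Σ_{(α,β) ∈ I(U,V)×I(V,W), α∘β = γ} |X^{Δ(U,α,V)}| · |Y^{Δ(V,β,W)}|, where the outer sum runs over all subgroups V of H. -/

import Mathlib

open scoped Classical

/-- The `H`-orbit relation on `X × Y` whose quotient is the tensor product
`X ×_H Y` of a `(G,H)`-biset `X` and an `(H,K)`-biset `Y`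
(`h • (x,y) = (x h⁻¹, h y)`, i.e. `((1,h) • x, (h,1) • y)`). -/
def tensSetoid (G H K X Y : Type*) [Group G] [Group H] [Group K]
    [MulAction (G × H) X] [MulAction (H × K) Y] : Setoid (X × Y) where
  r a b := ∃ h : H, ((((1 : G), h) : G × H) • a.1, ((h, (1 : K)) : H × K) • a.2) = b
  iseqv := by
    constructor
    · intro a; exact ⟨1, Prod.ext (one_smul (G × H) a.1) (one_smul (H × K) a.2)⟩
    · rintro a b ⟨h, rfl⟩
      exact ⟨h⁻¹, by simp [smul_smul]; exact Prod.ext (one_smul (G × H) _) (one_smul (H × K) _)⟩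
    · rintro a b c ⟨h, rfl⟩ ⟨h', rfl⟩
      exact ⟨h' * h, by simp [smul_smul]⟩

section Aux

variable {G H K : Type*} [Group G] [Group H] [Group K]
variable {X Y : Type*} [MulAction (G × H) X] [MulAction (H × K) Y]

lemma uniqH (hX2 : ∀ (x : X) (h : H), (((1 : G), h) : G × H) • x = x → h = 1)
    {x : X} {g : G} {h1 h2 : H} (e1 : ((g, h1) : G × H) • x = x)
    (e2 : ((g, h2) : G × H) • x = x) : h1 = h2 := by
  have e4 : ((g, h2) : G × H)⁻¹ • ((g, h1) : G × H) • x = ((g, h2) : G × H)⁻¹ • ((g, h2) : G × H) • x := by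
    rw [e1, e2]
  rw [inv_smul_smul, smul_smul] at e4
  have hp : ((g, h2) : G × H)⁻¹ * (g, h1) = (((1 : G), h2⁻¹ * h1) : G × H) := by
    simp [Prod.ext_iff]
  rw [hp] at e4
  exact (inv_mul_eq_one.mp (hX2 x _ e4)).symm

variable {U : Subgroup G} {W : Subgroup K}

lemma exists_triple
    (hX2 : ∀ (x : X) (h : H), (((1 : G), h) : G × H) • x = x → h = 1)
    (hY2 : ∀ (y : Y) (k : K), (((1 : H), k) : H × K) • y = y → k = 1)
    (γ : ↥W ≃* ↥U) (x : X) (y : Y)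
    (hfix : ∀ w : ↥W, ∃ h : H, ((((γ w : ↥U) : G), h) : G × H) • x = x ∧
      ((h, (w : K)) : H × K) • y = y) :
    ∃ (V : Subgroup H) (α : ↥V ≃* ↥U) (β : ↥W ≃* ↥V),
      β.trans α = γ ∧
      (∀ v : ↥V, ((((α v : ↥U) : G), (v : H)) : G × H) • x = x) ∧
      (∀ w : ↥W, ((((β w : ↥V) : H), (w : K)) : H × K) • y = y) := by
  choose f hf1 hf2 using hfix
  have hmul : ∀ a b : ↥W, f (a * b) = f a * f b := by
    intro a b
    refine uniqH hX2 (hf1 (a * b)) ?_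
    have hp : ((((γ (a * b) : ↥U) : G), f a * f b) : G × H)
        = ((((γ a : ↥U) : G), f a) : G × H) * ((((γ b : ↥U) : G), f b) : G × H) := by
      simp [Prod.ext_iff, map_mul]
    rw [hp, mul_smul, hf1 b, hf1 a]
  let φ : ↥W →* H := MonoidHom.mk' f hmul
  have hinj : Function.Injective φ := by
    rw [injective_iff_map_eq_one]
    intro w hw
    have h2 := hf2 w
    have : (f w, (w : K)) = (((1 : H), (w : K)) : H × K) := by
      simp [Prod.ext_iff]; exact hw
    rw [this] at h2
    exact Subtype.ext (hY2 y _ h2)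
  refine ⟨φ.range, ((MonoidHom.ofInjective hinj).symm.trans γ), MonoidHom.ofInjective hinj,
    ?_, ?_, ?_⟩
  · ext w; simp
  · intro v
    have h1 : ((((MonoidHom.ofInjective hinj).symm.trans γ) v : ↥U) : G)
        = ((γ ((MonoidHom.ofInjective hinj).symm v) : ↥U) : G) := rfl
    have h2 : (v : H) = f ((MonoidHom.ofInjective hinj).symm v) := by
      conv_lhs => rw [← (MonoidHom.ofInjective hinj).apply_symm_apply v]
      rfl
    rw [h1, h2]
    exact hf1 _
  · intro w
    exact hf2 w

lemma beta_coe_unique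
    (hX2 : ∀ (x : X) (h : H), (((1 : G), h) : G × H) • x = x → h = 1)
    (γ : ↥W ≃* ↥U) {x : X}
    {V V' : Subgroup H} {α : ↥V ≃* ↥U} {α' : ↥V' ≃* ↥U}
    {β : ↥W ≃* ↥V} {β' : ↥W ≃* ↥V'}
    (ht : β.trans α = γ) (ht' : β'.trans α' = γ)
    (hx : ∀ v : ↥V, ((((α v : ↥U) : G), (v : H)) : G × H) • x = x)
    (hx' : ∀ v : ↥V', ((((α' v : ↥U) : G), (v : H)) : G × H) • x = x)
    (w : ↥W) : ((β w : ↥V) : H) = ((β' w : ↥V') : H) := by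
  have e1 : ((((γ w : ↥U) : G), ((β w : ↥V) : H)) : G × H) • x = x := by
    have : α (β w) = γ w := by rw [← ht]; rfl
    rw [← this]; exact hx (β w)
  have e2 : ((((γ w : ↥U) : G), ((β' w : ↥V') : H)) : G × H) • x = x := by
    have : α' (β' w) = γ w := by rw [← ht']; rfl
    rw [← this]; exact hx' (β' w)
  exact uniqH hX2 e1 e2

lemma V_unique {V V' : Subgroup H} {β : ↥W ≃* ↥V} {β' : ↥W ≃* ↥V'}
    (hc : ∀ w : ↥W, ((β w : ↥V) : H) = ((β' w : ↥V') : H)) : V = V' := by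
  ext h
  constructor
  · intro hh
    have e : ((β (β.symm ⟨h, hh⟩) : ↥V) : H) = h := by rw [β.apply_symm_apply]
    rw [← e, hc]
    exact (β' (β.symm ⟨h, hh⟩)).2
  · intro hh
    have e : ((β' (β'.symm ⟨h, hh⟩) : ↥V') : H) = h := by rw [β'.apply_symm_apply]
    rw [← e, ← hc]
    exact (β (β'.symm ⟨h, hh⟩)).2

end Aux

/-- The set of fixed points of `Δ(U,γ,W)` on the tensor product. -/
abbrev FixSet {G K : Type*} (H : Type*) [Group G] [Group H] [Group K]
    (X Y : Type*) [MulAction (G × H) X] [MulAction (H × K) Y]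
    {U : Subgroup G} {W : Subgroup K} (γ : ↥W ≃* ↥U) :
    Set (Quotient (tensSetoid G H K X Y)) :=
  {q | ∀ (w : ↥W) (x : X) (y : Y), Quotient.mk (tensSetoid G H K X Y) (x, y) = q →
    Quotient.mk (tensSetoid G H K X Y)
      ((((γ w : ↥U) : G), (1 : H)) • x, (((1 : H), (w : K)) : H × K) • y) = q}

/-- The disjoint union of the sets `X^{Δ(U,α,V)} × Y^{Δ(V,β,W)}` over all
compatible triples `(V, α, β)`. -/
abbrev STyp {G K : Type*} (H : Type*) [Group G] [Group H] [Group K]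
    (X Y : Type*) [MulAction (G × H) X] [MulAction (H × K) Y]
    {U : Subgroup G} {W : Subgroup K} (γ : ↥W ≃* ↥U) : Type _ :=
  {s : Σ V : Subgroup H, (↥V ≃* ↥U) × (↥W ≃* ↥V) × X × Y //
    s.2.2.1.trans s.2.1 = γ ∧
    (∀ v : ↥s.1, ((((s.2.1 v : ↥U) : G), (v : H)) : G × H) • s.2.2.2.1 = s.2.2.2.1) ∧
    (∀ w : ↥W, ((((s.2.2.1 w : ↥s.1) : H), (w : K)) : H × K) • s.2.2.2.2 = s.2.2.2.2)}

abbrev projT {G K : Type*} (H : Type*) [Group G] [Group H] [Group K]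
    (X Y : Type*) [MulAction (G × H) X] [MulAction (H × K) Y]
    {U : Subgroup G} {W : Subgroup K} (γ : ↥W ≃* ↥U) (s : STyp H X Y γ) :
    Quotient (tensSetoid G H K X Y) :=
  Quotient.mk (tensSetoid G H K X Y) s.1.2.2.2

section Aux2

variable {G H K : Type*} [Group G] [Group H] [Group K]
variable {X Y : Type*} [MulAction (G × H) X] [MulAction (H × K) Y]
variable {U : Subgroup G} {W : Subgroup K}

lemma proj_mem_fix (γ : ↥W ≃* ↥U) (s : STyp H X Y γ) :
    projT H X Y γ s ∈ FixSet H X Y γ := by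
  obtain ⟨⟨V, α, β, x, y⟩, ht, hx, hy⟩ := s
  intro w x' y' hmk
  obtain ⟨h, hpe⟩ := Quotient.exact hmk
  have h1 : (((1 : G), h) : G × H) • x' = x := congrArg Prod.fst hpe
  have h2 : ((h, (1 : K)) : H × K) • y' = y := congrArg Prod.snd hpe
  refine (Quotient.sound ⟨((β w : ↥V) : H) * h, Prod.ext ?_ ?_⟩ :
      Quotient.mk (tensSetoid G H K X Y) _ = Quotient.mk (tensSetoid G H K X Y) (x, y))
  · show (((1 : G), ((β w : ↥V) : H) * h) : G × H) • ((((γ w : ↥U) : G), (1 : H)) : G × H) • x' = x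
    rw [smul_smul]
    have hp : (((1 : G), ((β w : ↥V) : H) * h) : G × H) * ((((γ w : ↥U) : G), (1 : H)) : G × H)
        = ((((γ w : ↥U) : G), ((β w : ↥V) : H)) : G × H) * (((1 : G), h) : G × H) := by
      simp [Prod.ext_iff]
    rw [hp, mul_smul, h1]
    have hγ : ((γ w : ↥U) : G) = ((α (β w) : ↥U) : G) := by rw [← ht]; rfl
    rw [hγ]
    exact hx (β w)
  · show ((((β w : ↥V) : H) * h, (1 : K)) : H × K) • (((1 : H), (w : K)) : H × K) • y' = y
    rw [smul_smul]
    have hp : ((((β w : ↥V) : H) * h, (1 : K)) : H × K) * (((1 : H), (w : K)) : H × K)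
        = ((((β w : ↥V) : H), (w : K)) : H × K) * ((h, (1 : K)) : H × K) := by
      simp [Prod.ext_iff]
    rw [hp, mul_smul, h2]
    exact hy w


lemma fiber_card
    (hX2 : ∀ (x : X) (h : H), (((1 : G), h) : G × H) • x = x → h = 1)
    (hY2 : ∀ (y : Y) (k : K), (((1 : H), k) : H × K) • y = y → k = 1)
    (γ : ↥W ≃* ↥U) (o : Quotient (tensSetoid G H K X Y)) (ho : o ∈ FixSet H X Y γ) :
    Nat.card {s : STyp H X Y γ // projT H X Y γ s = o}
      = Nat.card {p : X × Y // Quotient.mk (tensSetoid G H K X Y) p = o} := by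
  apply Nat.card_eq_of_bijective (fun s => ⟨s.1.1.2.2.2, s.2⟩)
  constructor
  · rintro ⟨⟨⟨V, α, β, x, y⟩, ht, hx, hy⟩, hproj⟩
      ⟨⟨⟨V', α', β', x', y'⟩, ht', hx', hy'⟩, hproj'⟩ hps
    have hpair : ((x, y) : X × Y) = (x', y') := congrArg Subtype.val hps
    injection hpair with hx0 hy0
    subst hx0; subst hy0
    have hc : ∀ w : ↥W, ((β w : ↥V) : H) = ((β' w : ↥V') : H) :=
      fun w => beta_coe_unique hX2 γ ht ht' hx hx' w
    have hV : V = V' := V_unique hc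
    subst hV
    have hβ : β = β' := by
      ext w
      exact congrArg Subtype.val (Subtype.ext (hc w) : β w = β' w)
    subst hβ
    have hα : α = α' := by
      ext v
      have h1 : α (β (β.symm v)) = α' (β (β.symm v)) := by
        rw [show α (β (β.symm v)) = (β.trans α) (β.symm v) from rfl,
            show α' (β (β.symm v)) = (β.trans α') (β.symm v) from rfl, ht, ht']
      rw [β.apply_symm_apply] at h1
      exact congrArg Subtype.val h1
    subst hα
    rfl
  · rintro ⟨p, hp⟩
    have hfix : ∀ w : ↥W, ∃ h : H, ((((γ w : ↥U) : G), h) : G × H) • p.1 = p.1 ∧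
        ((h, (w : K)) : H × K) • p.2 = p.2 := by
      intro w
      have h0 := ho w p.1 p.2 hp
      obtain ⟨h, hpe⟩ := Quotient.exact (h0.trans hp.symm)
      refine ⟨h, ?_, ?_⟩
      · have h3 : (((1 : G), h) : G × H) • ((((γ w : ↥U) : G), (1 : H)) : G × H) • p.1 = p.1 :=
          congrArg Prod.fst hpe
        rw [smul_smul] at h3
        rw [show (((1 : G), h) : G × H) * ((((γ w : ↥U) : G), (1 : H)) : G × H)
            = ((((γ w : ↥U) : G), h) : G × H) by simp [Prod.ext_iff]] at h3
        exact h3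
      · have h3 : ((h, (1 : K)) : H × K) • (((1 : H), (w : K)) : H × K) • p.2 = p.2 :=
          congrArg Prod.snd hpe
        rw [smul_smul] at h3
        rw [show ((h, (1 : K)) : H × K) * (((1 : H), (w : K)) : H × K)
            = ((h, (w : K)) : H × K) by simp [Prod.ext_iff]] at h3
        exact h3
    obtain ⟨V, α, β, ht, hx, hy⟩ := exists_triple hX2 hY2 γ p.1 p.2 hfix
    exact ⟨⟨⟨⟨V, α, β, p.1, p.2⟩, ht, hx, hy⟩, hp⟩, rfl⟩

lemma orbit_card
    (hX2 : ∀ (x : X) (h : H), (((1 : G), h) : G × H) • x = x → h = 1)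
    (o : Quotient (tensSetoid G H K X Y)) :
    Nat.card {p : X × Y // Quotient.mk (tensSetoid G H K X Y) p = o} = Nat.card H := by
  symm
  apply Nat.card_eq_of_bijective
    (fun h : H =>
      (⟨((((1 : G), h) : G × H) • o.out.1, ((h, (1 : K)) : H × K) • o.out.2), by
        have hs : Quotient.mk (tensSetoid G H K X Y) o.out
            = Quotient.mk (tensSetoid G H K X Y)
              ((((1 : G), h) : G × H) • o.out.1, ((h, (1 : K)) : H × K) • o.out.2) :=
          Quotient.sound ⟨h, rfl⟩
        rw [← hs, o.out_eq]⟩ :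
        {p : X × Y // Quotient.mk (tensSetoid G H K X Y) p = o}))
  constructor
  · intro h1 h2 he
    have e1 : (((1 : G), h1) : G × H) • o.out.1 = (((1 : G), h2) : G × H) • o.out.1 :=
      congrArg (fun s => s.1.1) he
    have h3 := congrArg (fun z => ((((1 : G), h2) : G × H))⁻¹ • z) e1
    simp only [inv_smul_smul] at h3
    rw [smul_smul] at h3
    rw [show (((1 : G), h2) : G × H)⁻¹ * (((1 : G), h1) : G × H)
        = (((1 : G), h2⁻¹ * h1) : G × H) by simp [Prod.ext_iff]] at h3
    exact (inv_mul_eq_one.mp (hX2 _ _ h3)).symm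
  · rintro ⟨p, hp⟩
    obtain ⟨h, hpe⟩ := Quotient.exact (o.out_eq.trans hp.symm)
    exact ⟨h, Subtype.ext hpe⟩

end Aux2

/-- for bifree bisets `X` (a `(G,H)`-biset) and `Y` (an
`(H,K)`-biset), isomorphic subgroups `U ≤ G`, `W ≤ K` and an isomorphism
`γ : W → U`:
`|(X ×_H Y)^{Δ(U,γ,W)}| = (1/|H|) · Σ_{V ≤ H} Σ_{(α,β) ∈ I(U,V)×I(V,W), α∘β=γ}
|X^{Δ(U,α,V)}|·|Y^{Δ(V,β,W)}|`.  Here `X ×_H Y` is the quotient of `X × Y` by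
`tensSetoid`, on which `(g,k)` acts by `[x,y] ↦ [(g,1)•x, (1,k)•y]`, and
`I(U,V)` is the set of group isomorphisms `V → U`. -/
theorem stmt5 {G H K : Type*} [Group G] [Group H] [Group K]
    [Finite G] [Finite H] [Finite K]
    (X Y : Type*) [Finite X] [Finite Y] [MulAction (G × H) X] [MulAction (H × K) Y]
    (hX1 : ∀ (x : X) (g : G), ((g, (1 : H)) : G × H) • x = x → g = 1)
    (hX2 : ∀ (x : X) (h : H), (((1 : G), h) : G × H) • x = x → h = 1)
    (hY1 : ∀ (y : Y) (h : H), ((h, (1 : K)) : H × K) • y = y → h = 1)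
    (hY2 : ∀ (y : Y) (k : K), (((1 : H), k) : H × K) • y = y → k = 1)
    (U : Subgroup G) (W : Subgroup K) (γ : ↥W ≃* ↥U) :
    (Nat.card {q : Quotient (tensSetoid G H K X Y) |
        ∀ (w : ↥W) (x : X) (y : Y), Quotient.mk (tensSetoid G H K X Y) (x, y) = q →
          Quotient.mk (tensSetoid G H K X Y)
            ((((γ w : ↥U) : G), (1 : H)) • x, (((1 : H), (w : K)) : H × K) • y) = q} : ℚ)
    = (1 / (Nat.card H : ℚ)) *
      ∑ᶠ (V : Subgroup H), ∑ᶠ (α : ↥V ≃* ↥U), ∑ᶠ (β : ↥W ≃* ↥V),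
        (if β.trans α = γ then
          (Nat.card {x : X | ∀ v : ↥V, ((((α v : ↥U) : G), (v : H)) : G × H) • x = x} : ℚ) *
          (Nat.card {y : Y | ∀ w : ↥W, ((((β w : ↥V) : H), (w : K)) : H × K) • y = y} : ℚ)
        else 0) := by
  classical
  letI : Fintype X := Fintype.ofFinite X
  letI : Fintype Y := Fintype.ofFinite Y
  letI : Fintype (Quotient (tensSetoid G H K X Y)) := Fintype.ofFinite _
  letI : Finite (Subgroup H) := Finite.of_injective _ SetLike.coe_injective
  letI : Fintype (Subgroup H) := Fintype.ofFinite _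
  letI : ∀ V : Subgroup H, Finite (↥V ≃* ↥U) :=
    fun V => Finite.of_injective _ MulEquiv.toEquiv_injective
  letI : ∀ V : Subgroup H, Finite (↥W ≃* ↥V) :=
    fun V => Finite.of_injective _ MulEquiv.toEquiv_injective
  letI iA : ∀ V : Subgroup H, Fintype (↥V ≃* ↥U) := fun V => Fintype.ofFinite _
  letI iB : ∀ V : Subgroup H, Fintype (↥W ≃* ↥V) := fun V => Fintype.ofFinite _
  -- first count
  have hcard1 : Nat.card (STyp H X Y γ) = Nat.card (FixSet H X Y γ) * Nat.card H := by
    calc Nat.card (STyp H X Y γ)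
        = Nat.card (Σ o : Quotient (tensSetoid G H K X Y),
            {s : STyp H X Y γ // projT H X Y γ s = o}) :=
          (Nat.card_congr (Equiv.sigmaFiberEquiv (projT H X Y γ))).symm
      _ = ∑ o : Quotient (tensSetoid G H K X Y),
            Nat.card {s : STyp H X Y γ // projT H X Y γ s = o} := by
          rw [Nat.card_eq_fintype_card, Fintype.card_sigma]
          exact Finset.sum_congr rfl fun o _ => (Nat.card_eq_fintype_card).symm
      _ = ∑ o : Quotient (tensSetoid G H K X Y),
            (if o ∈ FixSet H X Y γ then Nat.card H else 0) := by
          refine Finset.sum_congr rfl fun o _ => ?_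
          by_cases ho : o ∈ FixSet H X Y γ
          · rw [if_pos ho, fiber_card hX2 hY2 γ o ho, orbit_card hX2 o]
          · rw [if_neg ho]
            have : IsEmpty {s : STyp H X Y γ // projT H X Y γ s = o} :=
              ⟨fun s => ho (s.2 ▸ proj_mem_fix γ s.1)⟩
            exact Nat.card_of_isEmpty
      _ = (Finset.univ.filter (· ∈ FixSet H X Y γ)).card * Nat.card H := by
          rw [Finset.sum_ite, Finset.sum_const, Finset.sum_const_zero, add_zero, smul_eq_mul]
      _ = Nat.card (FixSet H X Y γ) * Nat.card H := by
          congr 1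
          rw [Nat.card_eq_fintype_card]
          convert (Fintype.card_subtype (· ∈ FixSet H X Y γ)).symm using 2
  -- second count
  have e2 : STyp H X Y γ ≃ Σ V : Subgroup H, Σ α : ↥V ≃* ↥U, Σ β : ↥W ≃* ↥V,
      {p : X × Y // β.trans α = γ ∧
        (∀ v : ↥V, ((((α v : ↥U) : G), (v : H)) : G × H) • p.1 = p.1) ∧
        (∀ w : ↥W, ((((β w : ↥V) : H), (w : K)) : H × K) • p.2 = p.2)} :=
    { toFun := fun s => ⟨s.1.1, s.1.2.1, s.1.2.2.1, ⟨s.1.2.2.2, s.2⟩⟩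
      invFun := fun t => ⟨⟨t.1, t.2.1, t.2.2.1, t.2.2.2.1⟩, t.2.2.2.2⟩
      left_inv := fun s => rfl
      right_inv := fun t => rfl }
  have hcard2 : Nat.card (STyp H X Y γ)
      = ∑ V : Subgroup H, ∑ α : ↥V ≃* ↥U, ∑ β : ↥W ≃* ↥V,
          (if β.trans α = γ then
            Nat.card {x : X | ∀ v : ↥V, ((((α v : ↥U) : G), (v : H)) : G × H) • x = x} *
            Nat.card {y : Y | ∀ w : ↥W, ((((β w : ↥V) : H), (w : K)) : H × K) • y = y}
          else 0) := by
    rw [Nat.card_congr e2, Nat.card_eq_fintype_card, Fintype.card_sigma]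
    refine Finset.sum_congr rfl fun V _ => ?_
    rw [Fintype.card_sigma]
    refine Finset.sum_congr rfl fun α _ => ?_
    rw [Fintype.card_sigma]
    refine Finset.sum_congr rfl fun β _ => ?_
    rw [← Nat.card_eq_fintype_card]
    by_cases hC : β.trans α = γ
    · rw [if_pos hC]
      have e3 : {p : X × Y // β.trans α = γ ∧
          (∀ v : ↥V, ((((α v : ↥U) : G), (v : H)) : G × H) • p.1 = p.1) ∧
          (∀ w : ↥W, ((((β w : ↥V) : H), (w : K)) : H × K) • p.2 = p.2)} ≃
          {x : X // ∀ v : ↥V, ((((α v : ↥U) : G), (v : H)) : G × H) • x = x} ×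
          {y : Y // ∀ w : ↥W, ((((β w : ↥V) : H), (w : K)) : H × K) • y = y} :=
        (Equiv.subtypeEquivRight (fun p => by simp [hC])).trans Equiv.subtypeProdEquivProd
      rw [Nat.card_congr e3, Nat.card_prod]
      rfl
    · rw [if_neg hC]
      have : IsEmpty {p : X × Y // β.trans α = γ ∧
          (∀ v : ↥V, ((((α v : ↥U) : G), (v : H)) : G × H) • p.1 = p.1) ∧
          (∀ w : ↥W, ((((β w : ↥V) : H), (w : K)) : H × K) • p.2 = p.2)} :=
        ⟨fun p => hC p.2.1⟩
      exact Nat.card_of_isEmpty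
  have hnat := hcard1.symm.trans hcard2
  have hne : (Nat.card H : ℚ) ≠ 0 := by
    exact_mod_cast (Nat.card_pos (α := H)).ne'
  simp only [finsum_eq_sum_of_fintype]
  rw [one_div, inv_mul_eq_div, eq_div_iff hne]
  exact_mod_cast hnat
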